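/- arXiv:math/0404507 — 2 statements merged into one kernel-verified Lean document; each statement's English description precedes it below -/
import Mathlib

section
/- Let 𝔏 be a Lie conformal algebra over a field k of characteristic zero, generated by a subset 𝒢 with weight function wt : 𝒢 → ℕ, with filtrations 𝔏'_i and 𝔏_i, and assume there is r ∈ ℕ such that every monomial in 𝒢 of weight ≥ r is zero. Let 𝔗 = span_k{ D^m a : m ∈ ℕ, a ∈ 𝔏_r }. For each 0 ≤ i ≤ r−1 let 𝓑_i ⊆ 𝔏_i be a subset whose image in 𝔏_i/(𝔏_{i+1} + D𝔏_{i+1}) is a k-basis, and set 𝓑 = 𝓑_0 ∪ ⋯ ∪ 𝓑_{r−1}. Then: (1) the images of the elements D^n b (n ∈ ℕ, b ∈ 𝓑) form a k-basis of 𝔏/𝔗; (2) every a ∈ 𝔏_i admits an expansion a = Σ k_{n,b}·D^n b + a₀ with k_{n,b} ∈ k, a₀ ∈ 𝔗, such that whenever k_{n,b} ≠ 0 one has D^n b ∈ 𝔏_i (i.e., b ∈ 𝓑_j with j − n ≥ i). -/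
open Finset

/-- A (bundled) conformal algebra over a field `𝕜`. -/
structure ConfAlg (𝕜 : Type) [Field 𝕜] where
  A : Type
  [ag : AddCommGroup A]
  [mo : Module 𝕜 A]
  mul : ℕ → A →ₗ[𝕜] A →ₗ[𝕜] A
  D : A →ₗ[𝕜] A
  dmul_zero : ∀ a b : A, mul 0 (D a) b = 0
  dmul_succ : ∀ (n : ℕ) (a b : A), mul (n + 1) (D a) b = (-(n + 1 : 𝕜)) • mul n a b
  leibniz : ∀ (n : ℕ) (a b : A), D (mul n a b) = mul n (D a) b + mul n a (D b)
  loc : ∀ a b : A, ∃ N : ℕ, ∀ n : ℕ, N ≤ n → mul n a b = 0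

attribute [instance] ConfAlg.ag ConfAlg.mo

variable {𝕜 : Type} [Field 𝕜]

/-- Divided power of the derivation: `D^{(s)} = D^s / s!`. -/
noncomputable def ConfAlg.dpow (C : ConfAlg 𝕜) (s : ℕ) (a : C.A) : C.A :=
  (s.factorial : 𝕜)⁻¹ • (C.D ^ s) a

/-- Conformal associativity. -/
def ConfAlg.IsAssoc (C : ConfAlg 𝕜) : Prop :=
  ∀ (a b c : C.A) (m n : ℕ),
    C.mul n (C.mul m a b) c =
      ∑ s ∈ Finset.range (m + 1), ((-1 : 𝕜) ^ s * (m.choose s : 𝕜)) •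
        C.mul (m - s) a (C.mul (n + s) b c)

/-- Conformal Jacobi identity together with quasi-symmetry. -/
def ConfAlg.IsLie (C : ConfAlg 𝕜) : Prop :=
  (∀ (a b c : C.A) (m n : ℕ),
    C.mul n (C.mul m a b) c =
      ∑ s ∈ Finset.range (m + 1), ((-1 : 𝕜) ^ s * (m.choose s : 𝕜)) •
        (C.mul (m - s) a (C.mul (n + s) b c) - C.mul (n + s) b (C.mul (m - s) a c))) ∧
  (∀ (a b : C.A) (n N : ℕ), (∀ s : ℕ, N ≤ s → C.mul (n + s) b a = 0) →
    C.mul n a b =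
      -∑ s ∈ Finset.range N, ((-1 : 𝕜) ^ (s + n)) • C.dpow s (C.mul (n + s) b a))

/-- Monomials in a family `f` with weights `wt`; `IsMon C f wt w v` means `w`
is a monomial (arbitrary placement of parentheses) of weight `v`. -/
inductive ConfAlg.IsMon (C : ConfAlg 𝕜) {I : Type} (f : I → C.A) (wt : I → ℕ) : C.A → ℕ → Prop
  | base (i : I) : ConfAlg.IsMon C f wt (f i) (wt i)
  | mul (n : ℕ) {a b : C.A} {wa wb : ℕ} :
      ConfAlg.IsMon C f wt a wa → ConfAlg.IsMon C f wt b wb →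
      ConfAlg.IsMon C f wt (C.mul n a b) (wa + wb + n)

/-- `G` generates `C`. -/
def ConfAlg.Generates (C : ConfAlg 𝕜) (G : Set C.A) : Prop :=
  ∀ p : Submodule 𝕜 C.A, G ⊆ ↑p → (∀ a ∈ p, C.D a ∈ p) →
    (∀ (n : ℕ) (a b : C.A), a ∈ p → b ∈ p → C.mul n a b ∈ p) → ∀ x : C.A, x ∈ p

/-- The filtration `𝔏'_i`. -/
def ConfAlg.Lp (C : ConfAlg 𝕜) {I : Type} (f : I → C.A) (wt : I → ℕ) (i : ℤ) :
    Submodule 𝕜 C.A :=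
  Submodule.span 𝕜 {x : C.A | ∃ (m : ℕ) (w : C.A) (v : ℕ),
    C.IsMon f wt w v ∧ x = (C.D ^ m) w ∧ i + m ≤ (v : ℤ)}

/-- The filtration `𝔏_i`. -/
def ConfAlg.Lf (C : ConfAlg 𝕜) {I : Type} (f : I → C.A) (wt : I → ℕ) (i : ℤ) : Set C.A :=
  {a : C.A | ∃ n : ℕ, (C.D ^ n) a ∈ C.Lp f wt (i - n)}

namespace ConfAlg

variable (C : ConfAlg 𝕜) {I : Type} (f : I → C.A) (wt : I → ℕ)

lemma pow_D_apply_succ (m : ℕ) (x : C.A) : (C.D ^ (m+1)) x = C.D ((C.D ^ m) x) := by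
  rw [pow_succ']; rfl

lemma D_pow_comm (n : ℕ) (x : C.A) : (C.D ^ n) (C.D x) = C.D ((C.D ^ n) x) := by
  induction n generalizing x with
  | zero => simp
  | succ n ih => rw [C.pow_D_apply_succ, C.pow_D_apply_succ, ih]

lemma pow_D_add_apply (k n : ℕ) (x : C.A) : (C.D ^ (k + n)) x = (C.D ^ k) ((C.D ^ n) x) := by
  induction k with
  | zero => simp
  | succ k ih =>
    have e : k + 1 + n = (k + n) + 1 := by omega
    rw [e, C.pow_D_apply_succ, C.pow_D_apply_succ, ih]

lemma Lp_mono {i j : ℤ} (h : i ≤ j) : C.Lp f wt j ≤ C.Lp f wt i := by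
  apply Submodule.span_mono
  rintro x ⟨m, w, v, hm, hx, hv⟩
  exact ⟨m, w, v, hm, hx, le_trans (by omega) hv⟩

lemma D_mem_Lp {i : ℤ} {x : C.A} (hx : x ∈ C.Lp f wt i) : C.D x ∈ C.Lp f wt (i - 1) := by
  induction hx using Submodule.span_induction with
  | mem x h =>
    obtain ⟨m, w, v, hm, hx, hv⟩ := h
    apply Submodule.subset_span
    exact ⟨m + 1, w, v, hm, by rw [hx, C.pow_D_apply_succ], by push_cast; omega⟩
  | zero => simp
  | add x y _ _ hx hy => rw [map_add]; exact add_mem hx hy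
  | smul a x _ hx => rw [map_smul]; exact Submodule.smul_mem _ _ hx

lemma Dpow_mem_Lp {i : ℤ} (k : ℕ) {x : C.A} (hx : x ∈ C.Lp f wt i) :
    (C.D ^ k) x ∈ C.Lp f wt (i - k) := by
  induction k with
  | zero => simpa using hx
  | succ k ih =>
    rw [C.pow_D_apply_succ]
    exact C.Lp_mono f wt (by push_cast; omega) (C.D_mem_Lp f wt ih)

lemma mon_mem_Lp {w : C.A} {v : ℕ} (hm : C.IsMon f wt w v) : w ∈ C.Lp f wt (v : ℤ) :=
  Submodule.subset_span ⟨0, w, v, hm, by simp, by simp⟩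

lemma Lf_mono {i j : ℤ} (h : i ≤ j) : C.Lf f wt j ⊆ C.Lf f wt i := by
  rintro a ⟨n, hn⟩
  exact ⟨n, C.Lp_mono f wt (by omega) hn⟩

lemma zero_mem_Lf (i : ℤ) : (0 : C.A) ∈ C.Lf f wt i :=
  ⟨0, by rw [map_zero]; exact Submodule.zero_mem _⟩

lemma add_mem_Lf {i : ℤ} {a b : C.A} (ha : a ∈ C.Lf f wt i) (hb : b ∈ C.Lf f wt i) :
    a + b ∈ C.Lf f wt i := by
  obtain ⟨n, hn⟩ := ha
  obtain ⟨m, hm⟩ := hb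
  refine ⟨max n m, ?_⟩
  rw [map_add]
  apply add_mem
  · have e : max n m = (max n m - n) + n := by omega
    rw [e, C.pow_D_add_apply]
    exact C.Lp_mono f wt (by push_cast; omega) (C.Dpow_mem_Lp f wt _ hn)
  · have e : max n m = (max n m - m) + m := by omega
    rw [e, C.pow_D_add_apply]
    exact C.Lp_mono f wt (by push_cast; omega) (C.Dpow_mem_Lp f wt _ hm)

lemma smul_mem_Lf {i : ℤ} (t : 𝕜) {a : C.A} (ha : a ∈ C.Lf f wt i) : t • a ∈ C.Lf f wt i := by
  obtain ⟨n, hn⟩ := ha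
  exact ⟨n, by rw [map_smul]; exact Submodule.smul_mem _ _ hn⟩

lemma sub_mem_Lf {i : ℤ} {a b : C.A} (ha : a ∈ C.Lf f wt i) (hb : b ∈ C.Lf f wt i) :
    a - b ∈ C.Lf f wt i := by
  rw [sub_eq_add_neg]
  refine C.add_mem_Lf f wt ha ?_
  have := C.smul_mem_Lf f wt (-1 : 𝕜) hb
  simpa using this

/-- `Lf i` as a submodule. -/
def LfSub (i : ℤ) : Submodule 𝕜 C.A where
  carrier := C.Lf f wt i
  zero_mem' := C.zero_mem_Lf f wt i
  add_mem' := C.add_mem_Lf f wt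
  smul_mem' := C.smul_mem_Lf f wt

lemma mem_span_Lf_iff {i : ℤ} {x : C.A} :
    x ∈ Submodule.span 𝕜 (C.Lf f wt i) ↔ x ∈ C.Lf f wt i := by
  constructor
  · intro h
    have hle : Submodule.span 𝕜 (C.Lf f wt i) ≤ C.LfSub f wt i := by
      rw [Submodule.span_le]; exact fun y hy => hy
    exact hle h
  · exact fun h => Submodule.subset_span h

lemma span_Lf_mono {i j : ℤ} (h : i ≤ j) :
    Submodule.span 𝕜 (C.Lf f wt j) ≤ Submodule.span 𝕜 (C.Lf f wt i) :=
  Submodule.span_mono (C.Lf_mono f wt h)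

lemma D_mem_Lf {i : ℤ} {a : C.A} (ha : a ∈ C.Lf f wt i) : C.D a ∈ C.Lf f wt (i - 1) := by
  obtain ⟨n, hn⟩ := ha
  refine ⟨n, ?_⟩
  rw [C.D_pow_comm]
  exact C.Lp_mono f wt (by omega) (C.D_mem_Lp f wt hn)

lemma Dpow_mem_Lf {i : ℤ} (k : ℕ) {a : C.A} (ha : a ∈ C.Lf f wt i) :
    (C.D ^ k) a ∈ C.Lf f wt (i - k) := by
  induction k with
  | zero => simpa using ha
  | succ k ih =>
    rw [C.pow_D_apply_succ]
    exact C.Lf_mono f wt (by push_cast; omega) (C.D_mem_Lf f wt ih)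

lemma D_inv_Lf {i : ℤ} {a : C.A} (ha : C.D a ∈ C.Lf f wt i) : a ∈ C.Lf f wt (i + 1) := by
  obtain ⟨n, hn⟩ := ha
  refine ⟨n + 1, ?_⟩
  have e : (C.D ^ (n+1)) a = (C.D ^ n) (C.D a) := by rw [pow_succ]; rfl
  rw [e]
  exact C.Lp_mono f wt (by push_cast; omega) hn

lemma mon_mem_Lf {w : C.A} {v : ℕ} (hm : C.IsMon f wt w v) : w ∈ C.Lf f wt (v : ℤ) :=
  ⟨0, by simpa using C.mon_mem_Lp f wt hm⟩


/-- The submodule `𝔗 = span{D^m a : a ∈ 𝔏_r}`. -/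
def Tmod (r : ℕ) : Submodule 𝕜 C.A :=
  Submodule.span 𝕜 {x : C.A | ∃ (m : ℕ) (a : C.A), a ∈ C.Lf f wt (r : ℤ) ∧ x = (C.D ^ m) a}

variable (r : ℕ)

lemma Lf_r_le_T {a : C.A} (ha : a ∈ C.Lf f wt (r : ℤ)) : a ∈ C.Tmod f wt r :=
  Submodule.subset_span ⟨0, a, ha, by simp⟩

lemma span_Lf_r_le_T : Submodule.span 𝕜 (C.Lf f wt (r : ℤ)) ≤ C.Tmod f wt r := by
  rw [Submodule.span_le]; exact fun a ha => C.Lf_r_le_T f wt r ha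

lemma D_mem_T {x : C.A} (hx : x ∈ C.Tmod f wt r) : C.D x ∈ C.Tmod f wt r := by
  induction hx using Submodule.span_induction with
  | mem x h =>
    obtain ⟨m, a, ha, hx⟩ := h
    exact Submodule.subset_span ⟨m + 1, a, ha, by rw [hx, C.pow_D_apply_succ]⟩
  | zero => simp
  | add x y _ _ hx hy => rw [map_add]; exact add_mem hx hy
  | smul t x _ hx => rw [map_smul]; exact Submodule.smul_mem _ _ hx

lemma Dpow_mem_T (k : ℕ) {x : C.A} (hx : x ∈ C.Tmod f wt r) : (C.D ^ k) x ∈ C.Tmod f wt r := by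
  induction k with
  | zero => simpa using hx
  | succ k ih => rw [C.pow_D_apply_succ]; exact C.D_mem_T f wt r ih

/-- Decomposition: every element of `T` is `a₀ + D s` with `a₀ ∈ 𝔏_r`, `s ∈ T`. -/
lemma T_decomp {t : C.A} (ht : t ∈ C.Tmod f wt r) :
    ∃ a₀ s : C.A, a₀ ∈ C.Lf f wt (r : ℤ) ∧ s ∈ C.Tmod f wt r ∧ t = a₀ + C.D s := by
  have hle : C.Tmod f wt r ≤
      Submodule.span 𝕜 (C.Lf f wt (r : ℤ)) ⊔ (C.Tmod f wt r).map C.D := by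
    rw [Tmod, Submodule.span_le]
    rintro x ⟨m, a, ha, hx⟩
    cases m with
    | zero =>
      apply Submodule.mem_sup_left
      exact Submodule.subset_span (by simpa using hx ▸ (by simpa using ha : a ∈ C.Lf f wt (r:ℤ)))
    | succ m =>
      apply Submodule.mem_sup_right
      rw [hx, C.pow_D_apply_succ]
      exact ⟨(C.D ^ m) a, Submodule.subset_span ⟨m, a, ha, rfl⟩, rfl⟩
  obtain ⟨y, hy, z, hz, hyz⟩ := Submodule.mem_sup.mp (hle ht)
  obtain ⟨s, hs, hsz⟩ := hz
  exact ⟨y, s, (C.mem_span_Lf_iff f wt).mp hy, hs, by rw [← hyz, ← hsz]⟩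

lemma D_inv_T {z : C.A} (hz : C.D z ∈ C.Tmod f wt r) : z ∈ C.Tmod f wt r := by
  obtain ⟨a₀, s, ha₀, hs, heq⟩ := C.T_decomp f wt r hz
  have hd : C.D (z - s) = a₀ := by rw [map_sub, heq]; abel
  have : z - s ∈ C.Lf f wt ((r : ℤ) + 1) := by
    apply C.D_inv_Lf f wt
    rw [hd]; exact ha₀
  have hzs : z - s ∈ C.Tmod f wt r :=
    C.Lf_r_le_T f wt r (C.Lf_mono f wt (by omega) this)
  have := add_mem hzs hs
  simpa using this

lemma Dpow_inv_T (k : ℕ) {z : C.A} (hz : (C.D ^ k) z ∈ C.Tmod f wt r) : z ∈ C.Tmod f wt r := by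
  induction k generalizing z with
  | zero => simpa using hz
  | succ k ih =>
    rw [C.pow_D_apply_succ] at hz
    exact ih (C.D_inv_T f wt r hz)

/-- `V`-lemma: if `D z ∈ 𝔏_j + T` then `z ∈ 𝔏_{j+1} + T`  (for `j + 1 ≤ r`). -/
lemma V_lemma {j : ℤ} (hj : j + 1 ≤ (r : ℤ)) {z u : C.A} (hu : u ∈ C.Tmod f wt r)
    (hdz : C.D z - u ∈ C.Lf f wt j) :
    ∃ z₁ t₁ : C.A, z₁ ∈ C.Lf f wt (j + 1) ∧ t₁ ∈ C.Tmod f wt r ∧ z = z₁ + t₁ := by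
  obtain ⟨a₀, s, ha₀, hs, heq⟩ := C.T_decomp f wt r hu
  have hd : C.D (z - s) ∈ C.Lf f wt j := by
    have : C.D (z - s) = (C.D z - u) + a₀ := by rw [map_sub, heq]; abel
    rw [this]
    exact C.add_mem_Lf f wt hdz (C.Lf_mono f wt (by omega) ha₀)
  exact ⟨z - s, s, C.D_inv_Lf f wt hd, hs, by abel⟩

/-- `KL'`: `T ∩ 𝔏_j ⊆ 𝔏_{j+1} + D 𝔏_{j+1}` for `j + 1 ≤ r`. -/
lemma KL {j : ℤ} (hj : j + 1 ≤ (r : ℤ)) {t : C.A} (ht : t ∈ C.Tmod f wt r)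
    (htj : t ∈ C.Lf f wt j) :
    t ∈ Submodule.span 𝕜 (C.Lf f wt (j + 1)) ⊔
      (Submodule.span 𝕜 (C.Lf f wt (j + 1))).map C.D := by
  obtain ⟨a₀, s, ha₀, hs, heq⟩ := C.T_decomp f wt r ht
  have hds : C.D s ∈ C.Lf f wt j := by
    have : C.D s = t - a₀ := by rw [heq]; abel
    rw [this]
    exact C.sub_mem_Lf f wt htj (C.Lf_mono f wt (by omega) ha₀)
  have hsj : s ∈ C.Lf f wt (j + 1) := C.D_inv_Lf f wt hds
  rw [heq]
  apply add_mem
  · exact Submodule.mem_sup_left (Submodule.subset_span (C.Lf_mono f wt (by omega) ha₀))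
  · exact Submodule.mem_sup_right ⟨s, Submodule.subset_span hsj, rfl⟩


section Exp

variable (B : Set C.A)

/-- Existence of an expansion `a = Σ k_{n,b} D^n b + a₀` with `a₀ ∈ T` and all
appearing pairs satisfying `P`. -/
def ExpP (P : ℕ × C.A → Prop) (a : C.A) : Prop :=
  ∃ c : (ℕ × C.A) →₀ 𝕜, (∀ p ∈ c.support, p.2 ∈ B ∧ P p) ∧
    a - (c.sum fun p t => t • (C.D ^ p.1) p.2) ∈ C.Tmod f wt r

variable {C f wt r B}

lemma expP_of_T {P : ℕ × C.A → Prop} {a : C.A} (ha : a ∈ C.Tmod f wt r) :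
    C.ExpP f wt r B P a :=
  ⟨0, by simp, by rw [Finsupp.sum_zero_index]; simpa using ha⟩

lemma expP_zero {P : ℕ × C.A → Prop} : C.ExpP f wt r B P 0 :=
  expP_of_T (Submodule.zero_mem _)

lemma expP_add {P : ℕ × C.A → Prop} {a b : C.A} (ha : C.ExpP f wt r B P a)
    (hb : C.ExpP f wt r B P b) : C.ExpP f wt r B P (a + b) := by
  classical
  obtain ⟨c₁, hc₁, ht₁⟩ := ha
  obtain ⟨c₂, hc₂, ht₂⟩ := hb
  refine ⟨c₁ + c₂, ?_, ?_⟩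
  · intro p hp
    rcases Finset.mem_union.mp (Finsupp.support_add hp) with h | h
    · exact hc₁ p h
    · exact hc₂ p h
  · rw [Finsupp.sum_add_index' (h := fun (p : ℕ × C.A) (t : 𝕜) => t • (C.D ^ p.1) p.2)
      (fun p => zero_smul 𝕜 _) (fun p t₁ t₂ => add_smul t₁ t₂ _)]
    have : a + b - (c₁.sum (fun p t => t • (C.D ^ p.1) p.2) +
        c₂.sum (fun p t => t • (C.D ^ p.1) p.2)) =
        (a - c₁.sum fun p t => t • (C.D ^ p.1) p.2) +
        (b - c₂.sum fun p t => t • (C.D ^ p.1) p.2) := by abel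
    rw [this]
    exact add_mem ht₁ ht₂

lemma expP_smul {P : ℕ × C.A → Prop} (s : 𝕜) {a : C.A} (ha : C.ExpP f wt r B P a) :
    C.ExpP f wt r B P (s • a) := by
  obtain ⟨c, hc, ht⟩ := ha
  refine ⟨s • c, ?_, ?_⟩
  · intro p hp
    exact hc p (Finsupp.support_smul hp)
  · rw [Finsupp.sum_smul_index' (h := fun (p : ℕ × C.A) (t : 𝕜) => t • (C.D ^ p.1) p.2) (fun p => zero_smul 𝕜 _)]
    have e : (c.sum fun p t => (s • t) • (C.D ^ p.1) p.2) =
        s • (c.sum fun p t => t • (C.D ^ p.1) p.2) := by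
      rw [Finsupp.smul_sum]
      exact Finsupp.sum_congr fun p _ => by rw [smul_smul, smul_eq_mul]
    rw [e, ← smul_sub]
    exact Submodule.smul_mem _ _ ht

lemma expP_span {P : ℕ × C.A → Prop} {S : Set C.A} {a : C.A}
    (ha : a ∈ Submodule.span 𝕜 S) (h : ∀ x ∈ S, C.ExpP f wt r B P x) :
    C.ExpP f wt r B P a := by
  induction ha using Submodule.span_induction with
  | mem x hx => exact h x hx
  | zero => exact expP_zero
  | add x y _ _ hx hy => exact expP_add hx hy
  | smul s x _ hx => exact expP_smul s hx

lemma expP_mono {P Q : ℕ × C.A → Prop} (h : ∀ p, P p → Q p) {a : C.A}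
    (ha : C.ExpP f wt r B P a) : C.ExpP f wt r B Q a := by
  obtain ⟨c, hc, ht⟩ := ha
  exact ⟨c, fun p hp => ⟨(hc p hp).1, h p (hc p hp).2⟩, ht⟩

lemma expP_D {P Q : ℕ × C.A → Prop} (hPQ : ∀ n b, P (n, b) → Q (n + 1, b)) {a : C.A}
    (ha : C.ExpP f wt r B P a) : C.ExpP f wt r B Q (C.D a) := by
  classical
  obtain ⟨c, hc, ht⟩ := ha
  refine ⟨Finsupp.mapDomain (fun p => (p.1 + 1, p.2)) c, ?_, ?_⟩
  · intro p hp
    obtain ⟨q, hq, hqp⟩ := Finset.mem_image.mp (Finsupp.mapDomain_support hp)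
    subst hqp
    exact ⟨(hc q hq).1, hPQ q.1 q.2 (by simpa using (hc q hq).2)⟩
  · rw [Finsupp.sum_mapDomain_index (h := fun (p : ℕ × C.A) (t : 𝕜) => t • (C.D ^ p.1) p.2)
      (fun p => zero_smul 𝕜 _) (fun p t₁ t₂ => add_smul t₁ t₂ _)]
    have e : (c.sum fun p t => t • (C.D ^ (p.1 + 1)) p.2) =
        C.D (c.sum fun p t => t • (C.D ^ p.1) p.2) := by
      rw [map_finsuppSum]
      exact Finsupp.sum_congr fun p _ => by rw [map_smul, C.pow_D_apply_succ]
    rw [e, ← map_sub]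
    exact C.D_mem_T f wt r ht

lemma expP_Dpow {j : ℤ} {a : C.A}
    (ha : C.ExpP f wt r B (fun p => (C.D ^ p.1) p.2 ∈ C.Lf f wt j) a) (m : ℕ) :
    C.ExpP f wt r B (fun p => (C.D ^ p.1) p.2 ∈ C.Lf f wt (j - m)) ((C.D ^ m) a) := by
  induction m with
  | zero => simpa using ha
  | succ m ih =>
    rw [C.pow_D_apply_succ]
    refine expP_D (fun n b h => ?_) ih
    rw [C.pow_D_apply_succ]
    exact C.Lf_mono f wt (by push_cast; omega) (C.D_mem_Lf f wt h)

lemma expP_base {P : ℕ × C.A → Prop} {b : C.A} (hb : b ∈ B) (hP : P (0, b)) :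
    C.ExpP f wt r B P b := by
  refine ⟨Finsupp.single (0, b) (1 : 𝕜), ?_, ?_⟩
  · intro p hp
    rw [Finsupp.support_single_ne_zero _ one_ne_zero] at hp
    rcases Finset.mem_singleton.mp hp with rfl
    exact ⟨hb, hP⟩
  · rw [Finsupp.sum_single_index (h := fun (p : ℕ × C.A) (t : 𝕜) => t • (C.D ^ p.1) p.2) (zero_smul 𝕜 _)]
    simp

lemma expP_finsuppB {P : ℕ × C.A → Prop} (c₀ : C.A →₀ 𝕜)
    (h : ∀ b ∈ c₀.support, b ∈ B ∧ P (0, b)) :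
    C.ExpP f wt r B P (c₀.sum fun b t => t • b) := by
  apply Finset.sum_induction _ _ (fun a b ha hb => expP_add ha hb) expP_zero
  intro b hb
  exact expP_smul _ (expP_base (h b hb).1 (h b hb).2)

end Exp


set_option maxHeartbeats 1000000 in
lemma key2 {C : ConfAlg 𝕜} {I : Type} {f : I → C.A} {wt : I → ℕ} {r : ℕ}
    {B : Set C.A} {Bs : ℕ → Set C.A}
    (hBsub : ∀ i : ℕ, i < r → Bs i ⊆ C.Lf f wt (i : ℤ))
    (hBspan : ∀ i : ℕ, i < r → ∀ a ∈ C.Lf f wt (i : ℤ),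
      ∃ c₀ : C.A →₀ 𝕜, (↑c₀.support : Set C.A) ⊆ Bs i ∧
        a - (c₀.sum fun b t => t • b) ∈ Submodule.span 𝕜 (C.Lf f wt ((i : ℤ) + 1)) ⊔
          (Submodule.span 𝕜 (C.Lf f wt ((i : ℤ) + 1))).map C.D)
    (hBmem : ∀ j, j < r → Bs j ⊆ B) :
    ∀ (d i : ℕ), i ≤ r → r - i ≤ d → ∀ a ∈ Submodule.span 𝕜 (C.Lf f wt (i : ℤ)),
      C.ExpP f wt r B (fun p => (C.D ^ p.1) p.2 ∈ C.Lf f wt (i : ℤ)) a := by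
  intro d
  induction d with
  | zero =>
    intro i hi hd a ha
    have hir : i = r := by omega
    subst hir
    exact expP_of_T (C.span_Lf_r_le_T f wt _ ha)
  | succ d ih =>
    intro i hir hd a ha
    by_cases hlt : i < r
    · refine expP_span ha (fun x hx => ?_)
      obtain ⟨c₀, hc₀s, hrest⟩ := hBspan i hlt x hx
      obtain ⟨v', hv', w'', hw'', hsum⟩ := Submodule.mem_sup.mp hrest
      obtain ⟨w, hw, rfl⟩ := hw''
      have hx_eq : x = (c₀.sum fun b t => t • b) + (v' + C.D w) :=
        sub_eq_iff_eq_add'.mp hsum.symm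
      have ecast : (i : ℤ) + 1 = ((i + 1 : ℕ) : ℤ) := by push_cast; ring
      rw [ecast] at hv' hw
      rw [hx_eq]
      apply expP_add
      · apply expP_finsuppB
        intro b hb
        have hbB : b ∈ Bs i := hc₀s hb
        exact ⟨hBmem i hlt hbB, by simpa using hBsub i hlt hbB⟩
      apply expP_add
      · refine expP_mono (fun p hp => ?_) (ih (i + 1) (by omega) (by omega) v' hv')
        exact C.Lf_mono f wt (by push_cast; omega) hp
      · refine expP_D (fun n b h => ?_) (ih (i + 1) (by omega) (by omega) w hw)
        rw [C.pow_D_apply_succ]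
        exact C.Lf_mono f wt (by push_cast; omega) (C.D_mem_Lf f wt h)
    · have hir2 : i = r := by omega
      subst hir2
      exact expP_of_T (C.span_Lf_r_le_T f wt _ ha)


lemma key2Lp {C : ConfAlg 𝕜} {I : Type} {f : I → C.A} {wt : I → ℕ} {r : ℕ}
    {B : Set C.A} {Bs : ℕ → Set C.A}
    (hr : ∀ (w : C.A) (v : ℕ), C.IsMon f wt w v → r ≤ v → w = 0)
    (hBsub : ∀ i : ℕ, i < r → Bs i ⊆ C.Lf f wt (i : ℤ))
    (hBspan : ∀ i : ℕ, i < r → ∀ a ∈ C.Lf f wt (i : ℤ),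
      ∃ c₀ : C.A →₀ 𝕜, (↑c₀.support : Set C.A) ⊆ Bs i ∧
        a - (c₀.sum fun b t => t • b) ∈ Submodule.span 𝕜 (C.Lf f wt ((i : ℤ) + 1)) ⊔
          (Submodule.span 𝕜 (C.Lf f wt ((i : ℤ) + 1))).map C.D)
    (hBmem : ∀ j, j < r → Bs j ⊆ B) :
    ∀ (i : ℤ) (a : C.A), a ∈ C.Lp f wt i →
      C.ExpP f wt r B (fun p => (C.D ^ p.1) p.2 ∈ C.Lf f wt i) a := by
  intro i a ha
  refine expP_span (show a ∈ Submodule.span 𝕜 _ from ha) ?_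
  rintro x ⟨m, w, v, hmon, rfl, hv⟩
  by_cases hvr : v < r
  · have hw : C.ExpP f wt r B (fun p => (C.D ^ p.1) p.2 ∈ C.Lf f wt ((v : ℕ) : ℤ)) w :=
      key2 hBsub hBspan hBmem r v (by omega) (by omega) w
        (Submodule.subset_span (C.mon_mem_Lf f wt hmon))
    refine expP_mono (fun p hp => ?_) (expP_Dpow hw m)
    exact C.Lf_mono f wt (by omega) hp
  · have hw0 : w = 0 := hr w v hmon (by omega)
    rw [hw0, map_zero]
    exact expP_zero

lemma expLf {C : ConfAlg 𝕜} {I : Type} {f : I → C.A} {wt : I → ℕ} {r : ℕ}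
    {B : Set C.A} {Bs : ℕ → Set C.A}
    (hr : ∀ (w : C.A) (v : ℕ), C.IsMon f wt w v → r ≤ v → w = 0)
    (hBsub : ∀ i : ℕ, i < r → Bs i ⊆ C.Lf f wt (i : ℤ))
    (hBspan : ∀ i : ℕ, i < r → ∀ a ∈ C.Lf f wt (i : ℤ),
      ∃ c₀ : C.A →₀ 𝕜, (↑c₀.support : Set C.A) ⊆ Bs i ∧
        a - (c₀.sum fun b t => t • b) ∈ Submodule.span 𝕜 (C.Lf f wt ((i : ℤ) + 1)) ⊔
          (Submodule.span 𝕜 (C.Lf f wt ((i : ℤ) + 1))).map C.D)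
    (hBmem : ∀ j, j < r → Bs j ⊆ B) :
    ∀ (i : ℤ) (a : C.A), a ∈ C.Lf f wt i →
      C.ExpP f wt r B (fun p => (C.D ^ p.1) p.2 ∈ C.Lf f wt i) a := by
  have hnn : ∀ (i : ℤ), 0 ≤ i → ∀ a ∈ C.Lf f wt i,
      C.ExpP f wt r B (fun p => (C.D ^ p.1) p.2 ∈ C.Lf f wt i) a := by
    intro i hi a ha
    by_cases hir : (r : ℤ) ≤ i
    · exact expP_of_T (C.Lf_r_le_T f wt r (C.Lf_mono f wt hir ha))
    · have hcast : ((i.toNat : ℕ) : ℤ) = i := Int.toNat_of_nonneg hi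
      rw [← hcast] at ha ⊢
      exact key2 hBsub hBspan hBmem r i.toNat (by omega) (by omega) a
        (Submodule.subset_span ha)
  intro i a ha
  by_cases hi : 0 ≤ i
  · exact hnn i hi a ha
  · push_neg at hi
    obtain ⟨n, hn⟩ := ha
    have hsplit : C.Lp f wt (i - n) ≤ (C.Lp f wt i).map (C.D ^ n) ⊔ C.Lp f wt (-(n : ℤ)) := by
      rw [show C.Lp f wt (i - n) = Submodule.span 𝕜 {x : C.A | ∃ (m : ℕ) (w : C.A) (v : ℕ),
        C.IsMon f wt w v ∧ x = (C.D ^ m) w ∧ (i - n) + m ≤ (v : ℤ)} from rfl,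
        Submodule.span_le]
      rintro x ⟨m, w, v, hm, rfl, hv⟩
      by_cases hmn : n ≤ m
      · apply Submodule.mem_sup_left
        refine ⟨(C.D ^ (m - n)) w,
          Submodule.subset_span ⟨m - n, w, v, hm, rfl, by rw [Nat.cast_sub hmn]; omega⟩, ?_⟩
        rw [← C.pow_D_add_apply, show n + (m - n) = m from by omega]
      · apply Submodule.mem_sup_right
        exact Submodule.subset_span ⟨m, w, v, hm, rfl, by push_cast; omega⟩
    obtain ⟨x₁, hx₁, ρ, hρ, hxρ⟩ := Submodule.mem_sup.mp (hsplit hn)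
    obtain ⟨a', ha', ha'x⟩ := hx₁
    have he : a - a' ∈ C.Lf f wt 0 := by
      refine ⟨n, ?_⟩
      have hd : (C.D ^ n) (a - a') = ρ := by
        rw [map_sub, ha'x, ← hxρ]; abel
      rw [hd]
      exact C.Lp_mono f wt (by omega) hρ
    have h1 := key2Lp hr hBsub hBspan hBmem i a' ha'
    have h2 := hnn 0 le_rfl _ he
    have h2' : C.ExpP f wt r B (fun p => (C.D ^ p.1) p.2 ∈ C.Lf f wt i) (a - a') :=
      expP_mono (fun p hp => C.Lf_mono f wt (by omega) hp) h2
    have hae : a = a' + (a - a') := by abel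
    rw [hae]
    exact expP_add h1 h2'


/-- The span of all `D^m w` with `w` a monomial. -/
def Pmon (C : ConfAlg 𝕜) {I : Type} (f : I → C.A) (wt : I → ℕ) : Submodule 𝕜 C.A :=
  Submodule.span 𝕜 {x : C.A | ∃ (m : ℕ) (w : C.A) (v : ℕ),
    C.IsMon f wt w v ∧ x = (C.D ^ m) w}

variable {C f wt}

lemma D_mem_Pmon {x : C.A} (hx : x ∈ C.Pmon f wt) : C.D x ∈ C.Pmon f wt := by
  induction hx using Submodule.span_induction with
  | mem x h =>
    obtain ⟨m, w, v, hm, rfl⟩ := h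
    exact Submodule.subset_span ⟨m + 1, w, v, hm, (C.pow_D_apply_succ m w).symm⟩
  | zero => simp
  | add x y _ _ hx hy => rw [map_add]; exact add_mem hx hy
  | smul t x _ hx => rw [map_smul]; exact Submodule.smul_mem _ _ hx

lemma mulD_mem {p : Submodule 𝕜 C.A} {a z : C.A} (h : ∀ n', C.mul n' a z ∈ p) :
    ∀ (m n : ℕ), C.mul n ((C.D ^ m) a) z ∈ p := by
  intro m
  induction m with
  | zero => intro n; simpa using h n
  | succ m ih =>
    intro n
    rw [C.pow_D_apply_succ]
    cases n with
    | zero => rw [C.dmul_zero]; exact Submodule.zero_mem _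
    | succ n => rw [C.dmul_succ]; exact Submodule.smul_mem _ _ (ih n)

lemma mul_mon_mem {w w' : C.A} {vw vw' : ℕ} (hw : C.IsMon f wt w vw)
    (hw' : C.IsMon f wt w' vw') :
    ∀ (k m n : ℕ), C.mul n ((C.D ^ m) w) ((C.D ^ k) w') ∈ C.Pmon f wt := by
  intro k
  induction k with
  | zero =>
    intro m n
    apply mulD_mem (fun n' => ?_)
    have : C.mul n' w ((C.D ^ 0) w') = C.mul n' w w' := by simp
    rw [this]
    exact Submodule.subset_span ⟨0, C.mul n' w w', vw + vw' + n',
      ConfAlg.IsMon.mul n' hw hw', by simp⟩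
  | succ k ih =>
    intro m n
    apply mulD_mem (fun n' => ?_)
    rw [C.pow_D_apply_succ]
    have hleib : C.mul n' w (C.D ((C.D ^ k) w')) =
        C.D (C.mul n' w ((C.D ^ k) w')) - C.mul n' (C.D w) ((C.D ^ k) w') := by
      rw [C.leibniz]; abel
    rw [hleib]
    apply sub_mem
    · apply D_mem_Pmon
      have := ih 0 n'
      simpa using this
    · have := ih 1 n'
      simpa using this

lemma mul_genL_mem {w : C.A} {v : ℕ} (hm : C.IsMon f wt w v) {b : C.A}
    (hb : b ∈ C.Pmon f wt) (m n : ℕ) : C.mul n ((C.D ^ m) w) b ∈ C.Pmon f wt := by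
  induction hb using Submodule.span_induction with
  | mem y hy =>
    obtain ⟨k, w', v', hm', rfl⟩ := hy
    exact mul_mon_mem hm hm' k m n
  | zero => simp
  | add x y _ _ hx hy =>
    rw [map_add]
    exact add_mem hx hy
  | smul t x _ hx =>
    rw [map_smul]
    exact Submodule.smul_mem _ _ hx

lemma mul_mem_Pmon {a b : C.A} (ha : a ∈ C.Pmon f wt) (hb : b ∈ C.Pmon f wt) (n : ℕ) :
    C.mul n a b ∈ C.Pmon f wt := by
  induction ha using Submodule.span_induction with
  | mem x h =>
    obtain ⟨m, w, v, hm, rfl⟩ := h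
    exact mul_genL_mem hm hb m n
  | zero => simp
  | add x y _ _ hx hy =>
    have : C.mul n (x + y) b = C.mul n x b + C.mul n y b := by
      rw [map_add]; rfl
    rw [this]
    exact add_mem hx hy
  | smul t x _ hx =>
    have : C.mul n (t • x) b = t • C.mul n x b := by
      rw [map_smul]; rfl
    rw [this]
    exact Submodule.smul_mem _ _ hx

lemma all_mem_Pmon (G : Set C.A) (wtG : ↥G → ℕ)
    (hgen : C.Generates G) (x : C.A) : x ∈ C.Pmon (Subtype.val : ↥G → C.A) wtG := by
  refine hgen (C.Pmon (Subtype.val : ↥G → C.A) wtG) ?_ ?_ ?_ x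
  · intro g hg
    have hset : g ∈ {x : C.A | ∃ (m : ℕ) (w : C.A) (v : ℕ),
        C.IsMon (Subtype.val : ↥G → C.A) wtG w v ∧ x = (C.D ^ m) w} :=
      by
        refine ⟨0, g, wtG ⟨g, hg⟩, ?_, by simp⟩
        exact ConfAlg.IsMon.base (⟨g, hg⟩ : ↥G)
    exact Submodule.subset_span hset
  · exact fun a ha => D_mem_Pmon ha
  · exact fun n a b ha hb => mul_mem_Pmon ha hb n


set_option maxHeartbeats 1000000 in
lemma indep {C : ConfAlg 𝕜} {I : Type} {f : I → C.A} {wt : I → ℕ} {r : ℕ}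
    {B : Set C.A} {Bs : ℕ → Set C.A}
    (hBsub : ∀ i : ℕ, i < r → Bs i ⊆ C.Lf f wt (i : ℤ))
    (hBind' : ∀ i : ℕ, i < r → ∀ c : C.A →₀ 𝕜, (↑c.support : Set C.A) ⊆ Bs i →
      (c.sum fun b t => t • b) ∈ Submodule.span 𝕜 (C.Lf f wt ((i : ℤ) + 1)) ⊔
        (Submodule.span 𝕜 (C.Lf f wt ((i : ℤ) + 1))).map C.D → c = 0)
    (hBex : ∀ b ∈ B, ∃ j, j < r ∧ b ∈ Bs j) :
    ∀ c : (ℕ × C.A) →₀ 𝕜, (∀ p ∈ c.support, p.2 ∈ B) →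
      (c.sum fun p t => t • (C.D ^ p.1) p.2) ∈ C.Tmod f wt r → c = 0 := by
  classical
  intro c hsupp hsum
  by_contra hc0
  have hne : c.support.Nonempty := Finsupp.support_nonempty_iff.mpr hc0
  -- the level function J
  set Jf : C.A → ℕ := fun b => ((Finset.range r).filter (fun j => b ∈ Bs j)).sup id with hJf
  have hJ : ∀ b ∈ B, b ∈ Bs (Jf b) ∧ Jf b < r := by
    intro b hb
    obtain ⟨j, hj, hbj⟩ := hBex b hb
    have hne' : ((Finset.range r).filter (fun j => b ∈ Bs j)).Nonempty :=
      ⟨j, Finset.mem_filter.mpr ⟨Finset.mem_range.mpr hj, hbj⟩⟩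
    obtain ⟨j', hj', hjeq⟩ := Finset.exists_mem_eq_sup _ hne' id
    have hj'2 := Finset.mem_filter.mp hj'
    have he : Jf b = j' := hjeq
    rw [he]
    exact ⟨hj'2.2, Finset.mem_range.mp hj'2.1⟩
  -- minimal n₀
  obtain ⟨p₀, hp₀, hp₀min⟩ := Finset.exists_min_image c.support Prod.fst hne
  set n₀ := p₀.1 with hn₀def
  have hn₀ : ∀ p ∈ c.support, n₀ ≤ p.1 := hp₀min
  have hp₀1 : p₀.1 = n₀ := rfl
  -- u with  x = D^{n₀} u
  set u := c.sum fun p t => t • (C.D ^ (p.1 - n₀)) p.2 with hudef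
  have hxu : (c.sum fun p t => t • (C.D ^ p.1) p.2) = (C.D ^ n₀) u := by
    rw [hudef, map_finsuppSum]
    apply Finsupp.sum_congr
    intro p hp
    rw [map_smul, ← C.pow_D_add_apply, show n₀ + (p.1 - n₀) = p.1 from by
      have := hn₀ p hp; omega]
  have hu : u ∈ C.Tmod f wt r := by
    apply C.Dpow_inv_T f wt r n₀
    rw [← hxu]
    exact hsum
  -- minimal level j*
  set S₀ := c.support.filter (fun p => p.1 = n₀) with hS₀def
  have hS₀ne : S₀.Nonempty := ⟨p₀, Finset.mem_filter.mpr ⟨hp₀, hp₀1⟩⟩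
  obtain ⟨pst, hpst, hpstmin⟩ := Finset.exists_min_image S₀ (fun p => Jf p.2) hS₀ne
  set js := Jf pst.2 with hjsdef
  have hpsteq : Jf pst.2 = js := rfl
  have hS₀B : ∀ p ∈ S₀, p.2 ∈ B := fun p hp => hsupp p (Finset.filter_subset _ _ hp)
  have hjsr : js < r := by
    rw [← hpsteq]
    exact (hJ _ (hS₀B pst hpst)).2
  have hjs_le : ∀ p ∈ S₀, js ≤ Jf p.2 := hpstmin
  have hS₀Lf : ∀ p ∈ S₀, p.2 ∈ C.Lf f wt (js : ℤ) := by
    intro p hp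
    have hb := hJ p.2 (hS₀B p hp)
    exact C.Lf_mono f wt (by exact_mod_cast hjs_le p hp) (hBsub _ hb.2 hb.1)
  -- decomposition u = y + D z
  set y := ∑ p ∈ S₀, c p • p.2 with hydef
  set z := ∑ p ∈ c.support.filter (fun p => ¬ p.1 = n₀), c p • (C.D ^ (p.1 - n₀ - 1)) p.2
    with hzdef
  have hu_eq : u = y + C.D z := by
    rw [hudef, Finsupp.sum, ← Finset.sum_filter_add_sum_filter_not c.support
      (fun p => p.1 = n₀), ← hS₀def]
    congr 1
    · rw [hydef]
      apply Finset.sum_congr rfl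
      intro p hp
      have h1 : p.1 = n₀ := (Finset.mem_filter.mp hp).2
      rw [h1, Nat.sub_self]
      simp
    · rw [hzdef, map_sum]
      apply Finset.sum_congr rfl
      intro p hp
      have h1 : ¬ p.1 = n₀ := (Finset.mem_filter.mp hp).2
      have h2 : n₀ ≤ p.1 := hn₀ p (Finset.filter_subset _ _ hp)
      rw [map_smul, ← C.pow_D_apply_succ, show p.1 - n₀ - 1 + 1 = p.1 - n₀ from by omega]
  have hyLf : y ∈ C.Lf f wt (js : ℤ) := by
    rw [← C.mem_span_Lf_iff f wt]
    exact Submodule.sum_mem _ fun p hp =>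
      Submodule.smul_mem _ _ (Submodule.subset_span (hS₀Lf p hp))
  -- V-lemma
  have hDzu : C.D z - u ∈ C.Lf f wt (js : ℤ) := by
    have hDz : C.D z - u = -y := by rw [hu_eq]; abel
    rw [hDz]
    have hneg := C.smul_mem_Lf f wt (-1 : 𝕜) hyLf
    simpa using hneg
  obtain ⟨z₁, t₁, hz₁, ht₁, hzeq⟩ :=
    C.V_lemma f wt r (by exact_mod_cast hjsr) hu hDzu
  -- y' and membership
  set S₁ := S₀.filter (fun p => Jf p.2 = js) with hS₁def
  set y' := ∑ p ∈ S₁, c p • p.2 with hy'def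
  have hyy'span : y - y' ∈ Submodule.span 𝕜 (C.Lf f wt ((js : ℤ) + 1)) := by
    have hsplit : y = y' + ∑ p ∈ S₀.filter (fun p => ¬ Jf p.2 = js), c p • p.2 := by
      rw [hydef, hy'def, hS₁def, Finset.sum_filter_add_sum_filter_not]
    have hsub : y - y' = ∑ p ∈ S₀.filter (fun p => ¬ Jf p.2 = js), c p • p.2 := by
      rw [hsplit]; abel
    rw [hsub]
    refine Submodule.sum_mem _ fun p hp => Submodule.smul_mem _ _ (Submodule.subset_span ?_)
    have hp0 := Finset.filter_subset _ _ hp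
    have hpne := (Finset.mem_filter.mp hp).2
    have hjlt : js + 1 ≤ Jf p.2 := by
      have := hjs_le p hp0
      omega
    have hb := hJ p.2 (hS₀B p hp0)
    exact C.Lf_mono f wt (by exact_mod_cast hjlt) (hBsub _ hb.2 hb.1)
  have hy'Lf : y' ∈ C.Lf f wt (js : ℤ) := by
    rw [← C.mem_span_Lf_iff f wt]
    exact Submodule.sum_mem _ fun p hp =>
      Submodule.smul_mem _ _ (Submodule.subset_span
        (hS₀Lf p (Finset.filter_subset _ _ hp)))
  set t₂ := u - C.D t₁ with ht₂def
  have ht₂T : t₂ ∈ C.Tmod f wt r := sub_mem hu (C.D_mem_T f wt r ht₁)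
  have ht₂eq : t₂ = y' + C.D z₁ + (y - y') := by
    rw [ht₂def, hu_eq, hzeq, map_add]; abel
  have ht₂Lf : t₂ ∈ C.Lf f wt (js : ℤ) := by
    rw [ht₂eq]
    refine C.add_mem_Lf f wt (C.add_mem_Lf f wt hy'Lf ?_) ?_
    · have hdz₁ := C.D_mem_Lf f wt hz₁
      exact C.Lf_mono f wt (by omega) hdz₁
    · exact C.Lf_mono f wt (by omega) ((C.mem_span_Lf_iff f wt).mp hyy'span)
  have hKL := C.KL f wt r (by exact_mod_cast hjsr) ht₂T ht₂Lf
  have hy'mem : y' ∈ Submodule.span 𝕜 (C.Lf f wt ((js : ℤ) + 1)) ⊔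
      (Submodule.span 𝕜 (C.Lf f wt ((js : ℤ) + 1))).map C.D := by
    have he : y' = t₂ - C.D z₁ - (y - y') := by rw [ht₂eq]; abel
    rw [he]
    refine sub_mem (sub_mem hKL ?_) (Submodule.mem_sup_left hyy'span)
    exact Submodule.mem_sup_right ⟨z₁, Submodule.subset_span hz₁, rfl⟩
  -- the finsupp c*
  set cs : C.A →₀ 𝕜 := Finsupp.onFinset (S₁.image Prod.snd)
    (fun b => if (n₀, b) ∈ c.support ∧ Jf b = js then c (n₀, b) else 0)
    (by
      intro b hb
      rw [ne_eq, ite_eq_right_iff, not_forall] at hb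
      obtain ⟨⟨hmem, hJb⟩, hval⟩ := hb
      refine Finset.mem_image.mpr ⟨(n₀, b), ?_, rfl⟩
      exact Finset.mem_filter.mpr ⟨Finset.mem_filter.mpr ⟨hmem, rfl⟩, hJb⟩) with hcsdef
  have hcs_apply : ∀ p ∈ S₁, cs p.2 = c p := by
    intro p hp
    have hp1 : p.1 = n₀ := (Finset.mem_filter.mp (Finset.filter_subset _ _ hp)).2
    have hpm : p ∈ c.support :=
      Finset.filter_subset _ _ (Finset.filter_subset _ _ hp)
    have hpJ : Jf p.2 = js := (Finset.mem_filter.mp hp).2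
    have hpe : (n₀, p.2) = p := by
      rw [← hp1]
    rw [hcsdef]
    simp only [Finsupp.onFinset_apply]
    rw [if_pos ⟨by rw [hpe]; exact hpm, hpJ⟩, hpe]
  have hcs_sum : (cs.sum fun b t => t • b) = y' := by
    rw [Finsupp.sum]
    rw [Finset.sum_subset (Finsupp.support_onFinset_subset)
      (fun b _ hnb => by rw [Finsupp.notMem_support_iff.mp hnb, zero_smul])]
    rw [Finset.sum_image (fun p hp q hq hpq => by
      have hp1 : p.1 = n₀ := (Finset.mem_filter.mp (Finset.filter_subset _ _ hp)).2
      have hq1 : q.1 = n₀ := (Finset.mem_filter.mp (Finset.filter_subset _ _ hq)).2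
      exact Prod.ext (by rw [hp1, hq1]) hpq)]
    rw [hy'def]
    exact Finset.sum_congr rfl fun p hp => by rw [hcs_apply p hp]
  have hcs_supp : (↑cs.support : Set C.A) ⊆ Bs js := by
    intro b hb
    have hb' : cs b ≠ 0 := Finsupp.mem_support_iff.mp hb
    rw [hcsdef] at hb'
    simp only [Finsupp.onFinset_apply] at hb'
    rw [ne_eq, ite_eq_right_iff, not_forall] at hb'
    obtain ⟨⟨hmem, hJb⟩, _⟩ := hb'
    have hbB : b ∈ B := hsupp (n₀, b) hmem
    have hmem2 := (hJ b hbB).1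
    rwa [hJb] at hmem2
  have hcs0 : cs = 0 := by
    refine hBind' js hjsr cs hcs_supp ?_
    rw [hcs_sum]
    exact hy'mem
  -- contradiction
  have hval : cs pst.2 = c pst := hcs_apply pst (Finset.mem_filter.mpr ⟨hpst, hpsteq⟩)
  have hne0 : c pst ≠ 0 :=
    Finsupp.mem_support_iff.mp (Finset.filter_subset _ _ hpst)
  rw [hcs0] at hval
  exact hne0 (by simpa using hval.symm)

end ConfAlg

/-- With `𝔗 = span{D^m a : a ∈ 𝔏_r}` and `𝓑 = ⋃_{i<r} 𝓑_i`, where the image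
of `𝓑_i` in `𝔏_i/(𝔏_{i+1} + D𝔏_{i+1})` is a basis: (1) the images of the `D^n b` (`n ∈ ℕ`,
`b ∈ 𝓑`) form a basis of `𝔏/𝔗`; (2) any `a ∈ 𝔏_i` has an expansion `a = Σ k_{n,b}·D^n b + a₀`
with `a₀ ∈ 𝔗` and `D^n b ∈ 𝔏_i` whenever `k_{n,b} ≠ 0`. -/
theorem basis_of_L_mod_T
    [CharZero 𝕜] (C : ConfAlg 𝕜) (hLie : C.IsLie) (G : Set C.A) (wt : ↥G → ℕ)
    (hgen : C.Generates G) (r : ℕ)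
    (hr : ∀ (w : C.A) (v : ℕ),
      C.IsMon (Subtype.val : ↥G → C.A) wt w v → r ≤ v → w = 0)
    (T : Submodule 𝕜 C.A)
    (hT : T = Submodule.span 𝕜 {x : C.A | ∃ (m : ℕ) (a : C.A),
      a ∈ C.Lf (Subtype.val : ↥G → C.A) wt (r : ℤ) ∧ x = (C.D ^ m) a})
    (LfS : ℤ → Submodule 𝕜 C.A)
    (hLfS : ∀ i : ℤ, LfS i = Submodule.span 𝕜 (C.Lf (Subtype.val : ↥G → C.A) wt i))
    (Bs : ℕ → Set C.A)
    (hBsub : ∀ i : ℕ, i < r → Bs i ⊆ C.Lf (Subtype.val : ↥G → C.A) wt (i : ℤ))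
    (hBind : ∀ i : ℕ, i < r → ∀ c : C.A →₀ 𝕜, (↑c.support : Set C.A) ⊆ Bs i →
      (c.sum fun b t => t • b) ∈ LfS ((i : ℤ) + 1) ⊔ (LfS ((i : ℤ) + 1)).map C.D → c = 0)
    (hBspan : ∀ i : ℕ, i < r → ∀ a ∈ C.Lf (Subtype.val : ↥G → C.A) wt (i : ℤ),
      ∃ c : C.A →₀ 𝕜, (↑c.support : Set C.A) ⊆ Bs i ∧
        a - (c.sum fun b t => t • b) ∈ LfS ((i : ℤ) + 1) ⊔ (LfS ((i : ℤ) + 1)).map C.D)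
    (B : Set C.A) (hB : B = ⋃ i ∈ Set.Iio r, Bs i) :
    ((∀ c : (ℕ × C.A) →₀ 𝕜, (∀ p ∈ c.support, p.2 ∈ B) →
        (c.sum fun p t => t • (C.D ^ p.1) p.2) ∈ T → c = 0) ∧
      (∀ a : C.A, ∃ c : (ℕ × C.A) →₀ 𝕜, (∀ p ∈ c.support, p.2 ∈ B) ∧
        a - (c.sum fun p t => t • (C.D ^ p.1) p.2) ∈ T)) ∧
    (∀ (i : ℤ) (a : C.A), a ∈ C.Lf (Subtype.val : ↥G → C.A) wt i →
      ∃ c : (ℕ × C.A) →₀ 𝕜, (∀ p ∈ c.support, p.2 ∈ B) ∧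
        (∀ p ∈ c.support, (C.D ^ p.1) p.2 ∈ C.Lf (Subtype.val : ↥G → C.A) wt i) ∧
        a - (c.sum fun p t => t • (C.D ^ p.1) p.2) ∈ T) := by
  classical
  have hTeq : T = C.Tmod (Subtype.val : ↥G → C.A) wt r := hT
  have hBspan' : ∀ i : ℕ, i < r → ∀ a ∈ C.Lf (Subtype.val : ↥G → C.A) wt (i : ℤ),
      ∃ c₀ : C.A →₀ 𝕜, (↑c₀.support : Set C.A) ⊆ Bs i ∧
        a - (c₀.sum fun b t => t • b) ∈
          Submodule.span 𝕜 (C.Lf (Subtype.val : ↥G → C.A) wt ((i : ℤ) + 1)) ⊔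
          (Submodule.span 𝕜 (C.Lf (Subtype.val : ↥G → C.A) wt ((i : ℤ) + 1))).map C.D := by
    intro i hi a ha
    have h := hBspan i hi a ha
    rwa [hLfS] at h
  have hBind' : ∀ i : ℕ, i < r → ∀ c : C.A →₀ 𝕜, (↑c.support : Set C.A) ⊆ Bs i →
      (c.sum fun b t => t • b) ∈
        Submodule.span 𝕜 (C.Lf (Subtype.val : ↥G → C.A) wt ((i : ℤ) + 1)) ⊔
        (Submodule.span 𝕜 (C.Lf (Subtype.val : ↥G → C.A) wt ((i : ℤ) + 1))).map C.D →
      c = 0 := by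
    intro i hi c hc h
    refine hBind i hi c hc ?_
    rwa [hLfS]
  have hBmem : ∀ j, j < r → Bs j ⊆ B := by
    intro j hj b hb
    rw [hB]
    exact Set.mem_biUnion hj hb
  have hBex : ∀ b ∈ B, ∃ j, j < r ∧ b ∈ Bs j := by
    intro b hb
    rw [hB] at hb
    obtain ⟨j, hj, hbj⟩ := Set.mem_iUnion₂.mp hb
    exact ⟨j, hj, hbj⟩
  refine ⟨⟨?_, ?_⟩, ?_⟩
  · -- (1a) linear independence modulo T
    intro c hsupp hsum
    rw [hTeq] at hsum
    exact ConfAlg.indep hBsub hBind' hBex c hsupp hsum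
  · -- (1b) spanning
    intro a
    have hp := ConfAlg.all_mem_Pmon G wt hgen a
    have hexp : C.ExpP (Subtype.val : ↥G → C.A) wt r B (fun _ => True) a := by
      refine ConfAlg.expP_span (show a ∈ Submodule.span 𝕜 _ from hp) ?_
      rintro x ⟨m, w, v, hmon, rfl⟩
      have hx : (C.D ^ m) w ∈ C.Lp (Subtype.val : ↥G → C.A) wt ((v : ℤ) - m) :=
        Submodule.subset_span ⟨m, w, v, hmon, rfl, by omega⟩
      have h2 := ConfAlg.key2Lp hr hBsub hBspan' hBmem ((v : ℤ) - m) _ hx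
      exact ConfAlg.expP_mono (fun _ _ => trivial) h2
    obtain ⟨c, hc, ht⟩ := hexp
    refine ⟨c, fun p hp' => (hc p hp').1, ?_⟩
    rw [hTeq]
    exact ht
  · -- (2) filtered expansions
    intro i a ha
    have h := ConfAlg.expLf hr hBsub hBspan' hBmem i a ha
    obtain ⟨c, hc, ht⟩ := h
    refine ⟨c, fun p hp' => (hc p hp').1, fun p hp' => (hc p hp').2, ?_⟩
    rw [hTeq]
    exact ht
end

section
/- Let 𝔏 be a Lie conformal algebra over a field k of characteristic zero, generated by a subset 𝒢 with weight function wt : 𝒢 → ℕ, with filtrations 𝔏'_i and 𝔏_i, and assume there is r ∈ ℕ such that every monomial in 𝒢 of weight ≥ r is zero. Set 𝔏_∞ = ∩_{i∈ℤ} 𝔏_i. Then 𝔏_∞ is a central ideal of 𝔏: D𝔏_∞ ⊆ 𝔏_∞, and for all a ∈ 𝔏_∞, b ∈ 𝔏 and n ∈ ℕ one has a[n]b = 0 and b[n]a = 0. -/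
open Finset

variable {𝕜 : Type} [Field 𝕜]

/-- If `q < p`, then `mul q (D^p x) b = 0` (peeling derivations). -/
lemma ConfAlg.mul_powD_high (C : ConfAlg 𝕜) :
    ∀ q p : ℕ, q < p → ∀ x b : C.A, C.mul q ((C.D ^ p) x) b = 0 := by
  intro q
  induction q with
  | zero =>
    intro p hp x b
    obtain ⟨p', rfl⟩ : ∃ p', p = p' + 1 := ⟨p - 1, by omega⟩
    rw [pow_succ', Module.End.mul_apply]
    exact C.dmul_zero _ _
  | succ s ih =>
    intro p hp x b
    obtain ⟨p', rfl⟩ : ∃ p', p = p' + 1 := ⟨p - 1, by omega⟩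
    rw [pow_succ', Module.End.mul_apply, C.dmul_succ s ((C.D ^ p') x) b,
      ih p' (by omega) x b, smul_zero]

/-- `mul (n+m) (D^m x) b` is a nonzero multiple of `mul n x b`. -/
lemma ConfAlg.mul_powD (C : ConfAlg 𝕜) [CharZero 𝕜] (m n : ℕ) (x b : C.A) :
    ∃ c : 𝕜, c ≠ 0 ∧ C.mul (n + m) ((C.D ^ m) x) b = c • C.mul n x b := by
  induction m with
  | zero => exact ⟨1, one_ne_zero, by simp⟩
  | succ s ih =>
    obtain ⟨c, hc, hmul⟩ := ih
    have hne : (-(((n + s : ℕ) : 𝕜) + 1)) ≠ 0 := by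
      simp only [ne_eq, neg_eq_zero]
      exact Nat.cast_add_one_ne_zero (n + s)
    refine ⟨(-(((n + s : ℕ) : 𝕜) + 1)) * c, mul_ne_zero hne hc, ?_⟩
    have h1 : n + (s + 1) = (n + s) + 1 := by omega
    rw [h1, pow_succ', Module.End.mul_apply, C.dmul_succ (n + s) ((C.D ^ s) x) b,
      hmul, smul_smul]

/-- `D` maps `𝔏'_j` into `𝔏'_{j-1}`. -/
lemma ConfAlg.D_mem_Lp_s19 (C : ConfAlg 𝕜) {I : Type} (f : I → C.A) (wt : I → ℕ) (j : ℤ)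
    {x : C.A} (hx : x ∈ C.Lp f wt j) : C.D x ∈ C.Lp f wt (j - 1) := by
  induction hx using Submodule.span_induction with
  | mem x hx =>
    obtain ⟨m, w, v, hw, rfl, hle⟩ := hx
    refine Submodule.subset_span ⟨m + 1, w, v, hw, ?_, by push_cast; omega⟩
    rw [pow_succ', Module.End.mul_apply]
  | zero => simp
  | add x y _ _ hx hy => rw [map_add]; exact add_mem hx hy
  | smul c x _ hx => rw [map_smul]; exact Submodule.smul_mem _ _ hx

/-- `𝔏_∞ = ∩_i 𝔏_i` is a central ideal of `𝔏`: it is `D`-invariant and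
annihilates `𝔏` on both sides. -/
theorem Lf_inf_central_ideal
    [CharZero 𝕜] (C : ConfAlg 𝕜) (hLie : C.IsLie) (G : Set C.A) (wt : ↥G → ℕ)
    (hgen : C.Generates G) (r : ℕ)
    (hr : ∀ (w : C.A) (v : ℕ),
      C.IsMon (Subtype.val : ↥G → C.A) wt w v → r ≤ v → w = 0) :
    (∀ a : C.A, (∀ i : ℤ, a ∈ C.Lf (Subtype.val : ↥G → C.A) wt i) →
        ∀ i : ℤ, C.D a ∈ C.Lf (Subtype.val : ↥G → C.A) wt i) ∧
    (∀ a : C.A, (∀ i : ℤ, a ∈ C.Lf (Subtype.val : ↥G → C.A) wt i) →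
        ∀ (b : C.A) (n : ℕ), C.mul n a b = 0 ∧ C.mul n b a = 0) := by
  constructor
  · -- D-invariance
    intro a ha i
    obtain ⟨n, hn⟩ := ha (i + 1)
    refine ⟨n, ?_⟩
    have h1 : (C.D ^ n) (C.D a) = C.D ((C.D ^ n) a) := by
      rw [← Module.End.mul_apply, ← pow_succ, pow_succ', Module.End.mul_apply]
    rw [h1]
    have h2 := C.D_mem_Lp_s19 (Subtype.val : ↥G → C.A) wt (i + 1 - n) hn
    have h3 : i + 1 - (n : ℤ) - 1 = i - n := by ring
    rwa [h3] at h2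
  · -- centrality
    intro a ha b n
    -- from membership at level r, obtain m with D^m a ∈ 𝔏'_{r-m}
    obtain ⟨m, haL⟩ := ha (r : ℤ)
    -- a annihilates every monomial on the left
    have hmon : ∀ (k : ℕ) (w' : C.A) (v' : ℕ),
        C.IsMon (Subtype.val : ↥G → C.A) wt w' v' → C.mul k a w' = 0 := by
      intro k w' v' hw'
      obtain ⟨c, hc, hmul⟩ := C.mul_powD m k a w'
      have key : ∀ x ∈ C.Lp (Subtype.val : ↥G → C.A) wt ((r : ℤ) - m),
          C.mul (k + m) x w' = 0 := by
        intro x hx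
        induction hx using Submodule.span_induction with
        | mem x hx =>
          obtain ⟨p, w, v, hwmon, rfl, hle⟩ := hx
          by_cases hp : k + m < p
          · exact C.mul_powD_high (k + m) p hp w w'
          · push_neg at hp
            obtain ⟨c', hc', h'⟩ := C.mul_powD p (k + m - p) w w'
            have hkm : k + m - p + p = k + m := by omega
            rw [hkm] at h'
            rw [h', hr _ _ (ConfAlg.IsMon.mul (k + m - p) hwmon hw')
              (by omega), smul_zero]
        | zero => simp
        | add x y _ _ hx hy => rw [map_add, LinearMap.add_apply, hx, hy, add_zero]
        | smul c x _ hx => rw [map_smul, LinearMap.smul_apply, hx, smul_zero]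
      have h0 := key _ haL
      rw [hmul] at h0
      exact (smul_eq_zero.mp h0).resolve_left hc
    -- the set of b annihilated by a on both sides is a submodule
    set p : Submodule 𝕜 C.A :=
      ⨅ k : ℕ, (LinearMap.ker (C.mul k a) ⊓ LinearMap.ker ((C.mul k).flip a)) with hp
    have hmem : ∀ x : C.A, x ∈ p ↔ ∀ k : ℕ, C.mul k a x = 0 ∧ C.mul k x a = 0 := by
      intro x
      simp only [hp, Submodule.mem_iInf, Submodule.mem_inf, LinearMap.mem_ker,
        LinearMap.flip_apply]
    -- quasi-symmetry: left annihilation (all k) implies right annihilation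
    have hsym : ∀ x : C.A, (∀ k : ℕ, C.mul k a x = 0) → ∀ k : ℕ, C.mul k x a = 0 := by
      intro x hx k
      rw [hLie.2 x a k 0 (fun s _ => hx (k + s))]
      simp
    have hGsub : G ⊆ (p : Set C.A) := by
      intro g hg
      have hbase : C.IsMon (Subtype.val : ↥G → C.A) wt g
          (wt (⟨g, hg⟩ : {x // x ∈ G})) :=
        ConfAlg.IsMon.base (⟨g, hg⟩ : {x // x ∈ G})
      refine (hmem g).mpr fun k => ⟨hmon k g _ hbase, hsym g (fun k' => hmon k' g _ hbase) k⟩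
    have hD : ∀ x ∈ p, C.D x ∈ p := by
      intro x hx
      obtain hx' := (hmem x).mp hx
      refine (hmem (C.D x)).mpr fun k => ⟨?_, ?_⟩
      · have hl := C.leibniz k a x
        have hDa : C.mul k (C.D a) x = 0 := by
          cases k with
          | zero => exact C.dmul_zero a x
          | succ s => rw [C.dmul_succ s a x, (hx' s).1, smul_zero]
        rw [(hx' k).1, map_zero, hDa, zero_add] at hl
        exact hl.symm
      · cases k with
        | zero => exact C.dmul_zero x a
        | succ s => rw [C.dmul_succ s x a, (hx' s).2, smul_zero]
    have hMul : ∀ (k : ℕ) (x y : C.A), x ∈ p → y ∈ p → C.mul k x y ∈ p := by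
      intro k x y hx hy
      obtain hx' := (hmem x).mp hx
      obtain hy' := (hmem y).mp hy
      have hright : ∀ j : ℕ, C.mul j (C.mul k x y) a = 0 := by
        intro j
        rw [hLie.1 x y a k j]
        refine Finset.sum_eq_zero fun s _ => ?_
        rw [(hy' (j + s)).2, map_zero, (hx' (k - s)).2, map_zero, sub_zero, smul_zero]
      have hleft : ∀ j : ℕ, C.mul j a (C.mul k x y) = 0 := by
        intro j
        rw [hLie.2 a (C.mul k x y) j 0 (fun s _ => hright (j + s))]
        simp
      exact (hmem _).mpr fun j => ⟨hleft j, hright j⟩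
    have hb := hgen p hGsub hD hMul b
    exact (hmem b).mp hb n
end
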